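/- If M and N are Markov monoids, then the direct product M × N is a Markov monoid. Moreover, if M and N are robustly Markov monoids (each admitting a robust monoid Markov language over some finite alphabet representing a generating set), then M × N is a robustly Markov monoid. -/

import Mathlib

open Function

/-- A language is regular if it is accepted by a deterministic finite automaton
with a finite state set. -/
def RegularLang {A : Type} (L : Language A) : Prop :=
  ∃ (Q : Type) (_ : Fintype Q) (M : DFA A Q), M.accepts = L

/-- The product of a nonempty word under the letter-assignment `φ`; the empty
word is sent to `none`. This is the induced map `φ⁺` on nonempty words. -/
def prodPlus {A S : Type} [Semigroup S] (φ : A → S) : List A → Option S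
  | [] => none
  | a :: w => some (w.foldl (fun s b => s * φ b) (φ a))

/-- The induced monoid homomorphism `φ*` from the free monoid of words. -/
def monProd {A M : Type} [Monoid M] (φ : A → M) (w : List A) : M :=
  (w.map φ).prod

/-- A semigroup Markov language for `S` over `A` (with respect to `φ`): a regular,
`+`-prefix-closed language of nonempty words mapping bijectively onto `S` under `φ⁺`. -/
structure IsSgMarkovLang {A S : Type} [Semigroup S] (φ : A → S) (L : Language A) : Prop where
  regular : RegularLang L
  not_empty_mem : [] ∉ L
  plus_prefix_closed : ∀ u v : List A, u ≠ [] → v ≠ [] → u ++ v ∈ L → u ∈ L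
  unique_rep : ∀ s : S, ∃! w : List A, w ∈ L ∧ prodPlus φ w = some s

/-- A robust semigroup Markov language: additionally every word of `L` has minimal
length among (nonempty) words representing the same element. -/
structure IsRobustSgMarkovLang {A S : Type} [Semigroup S] (φ : A → S) (L : Language A)
    extends IsSgMarkovLang φ L : Prop where
  min_length : ∀ w ∈ L, ∀ v : List A, prodPlus φ v = prodPlus φ w → w.length ≤ v.length

/-- A monoid Markov language for `M` over `A` (with respect to `φ`): a regular,
prefix-closed language mapping bijectively onto `M` under `φ*`. -/
structure IsMonMarkovLang {A M : Type} [Monoid M] (φ : A → M) (L : Language A) : Prop where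
  regular : RegularLang L
  prefix_closed : ∀ u v : List A, u ++ v ∈ L → u ∈ L
  unique_rep : ∀ m : M, ∃! w : List A, w ∈ L ∧ monProd φ w = m

/-- A robust monoid Markov language: additionally every word of `L` has minimal
length among words representing the same element. -/
structure IsRobustMonMarkovLang {A M : Type} [Monoid M] (φ : A → M) (L : Language A)
    extends IsMonMarkovLang φ L : Prop where
  min_length : ∀ w ∈ L, ∀ v : List A, monProd φ v = monProd φ w → w.length ≤ v.length

/-- `S` is Markov as a semigroup. -/
def SgMarkov (S : Type) [Semigroup S] : Prop :=
  ∃ (A : Type) (_ : Fintype A) (φ : A → S),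
    (∀ s : S, ∃ w : List A, prodPlus φ w = some s) ∧
    ∃ L : Language A, IsSgMarkovLang φ L

/-- `S` is robustly Markov (as a semigroup) with respect to some alphabet. -/
def SgRobustlyMarkov (S : Type) [Semigroup S] : Prop :=
  ∃ (A : Type) (_ : Fintype A) (φ : A → S),
    (∀ s : S, ∃ w : List A, prodPlus φ w = some s) ∧
    ∃ L : Language A, IsRobustSgMarkovLang φ L

/-- `S` is strongly Markov (as a semigroup). -/
def SgStronglyMarkov (S : Type) [Semigroup S] : Prop :=
  ∀ (A : Type) [Fintype A] (φ : A → S),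
    (∀ s : S, ∃ w : List A, prodPlus φ w = some s) →
    ∃ L : Language A, IsRobustSgMarkovLang φ L

/-- `M` is Markov as a monoid. -/
def MonMarkov (M : Type) [Monoid M] : Prop :=
  ∃ (A : Type) (_ : Fintype A) (φ : A → M),
    Surjective (monProd φ) ∧ ∃ L : Language A, IsMonMarkovLang φ L

/-- `M` is robustly Markov (as a monoid) with respect to some alphabet. -/
def MonRobustlyMarkov (M : Type) [Monoid M] : Prop :=
  ∃ (A : Type) (_ : Fintype A) (φ : A → M),
    Surjective (monProd φ) ∧ ∃ L : Language A, IsRobustMonMarkovLang φ L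

/-- `M` is strongly Markov (as a monoid). -/
def MonStronglyMarkov (M : Type) [Monoid M] : Prop :=
  ∀ (A : Type) [Fintype A] (φ : A → M),
    Surjective (monProd φ) →
    ∃ L : Language A, IsRobustMonMarkovLang φ L

section Aux

variable {A B M N : Type} [Monoid M] [Monoid N]

def pairMap (φ : A → M) (ψ : B → N) : A ⊕ B → M × N :=
  Sum.elim (fun a => (φ a, 1)) (fun b => (1, ψ b))

lemma monProd_cons {φ : A → M} (a : A) (w : List A) :
    monProd φ (a :: w) = φ a * monProd φ w := by simp [monProd]

lemma monProd_pairMap (φ : A → M) (ψ : B → N) (w : List (A ⊕ B)) :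
    monProd (pairMap φ ψ) w =
      (monProd φ (w.filterMap Sum.getLeft?), monProd ψ (w.filterMap Sum.getRight?)) := by
  induction w with
  | nil => simp [monProd]; rfl
  | cons c w ih =>
    cases c with
    | inl a =>
      simp only [List.filterMap_cons, Sum.getLeft?, Sum.getRight?, monProd_cons, ih]
      ext <;> simp [pairMap]
    | inr b =>
      simp only [List.filterMap_cons, Sum.getLeft?, Sum.getRight?, monProd_cons, ih]
      ext <;> simp [pairMap]

lemma length_filterMap_sum (w : List (A ⊕ B)) :
    (w.filterMap Sum.getLeft?).length + (w.filterMap Sum.getRight?).length = w.length := by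
  induction w with
  | nil => simp
  | cons c w ih =>
    cases c <;> simp [List.filterMap_cons, Sum.getLeft?, Sum.getRight?] <;> omega

lemma filterMap_encode_left (u : List A) (v : List B) :
    ((u.map Sum.inl ++ v.map Sum.inr).filterMap Sum.getLeft? : List A) = u := by
  simp [List.filterMap_append, List.filterMap_map, Function.comp_def]

lemma filterMap_encode_right (u : List A) (v : List B) :
    ((u.map Sum.inl ++ v.map Sum.inr).filterMap Sum.getRight? : List B) = v := by
  simp [List.filterMap_append, List.filterMap_map, Function.comp_def]

end Aux

section DFAsect

variable {A B Q₁ Q₂ : Type}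

def prodDFA (D₁ : DFA A Q₁) (D₂ : DFA B Q₂) : DFA (A ⊕ B) (Option (Q₁ × Q₂ × Bool)) where
  step
    | none, _ => none
    | some (q, r, false), Sum.inl a => some (D₁.step q a, r, false)
    | some (_, _, true), Sum.inl _ => none
    | some (q, r, _), Sum.inr b => some (q, D₂.step r b, true)
  start := some (D₁.start, D₂.start, false)
  accept := {s | ∃ q r b, s = some (q, r, b) ∧ q ∈ D₁.accept ∧ r ∈ D₂.accept}

variable (D₁ : DFA A Q₁) (D₂ : DFA B Q₂)

lemma prodDFA_eval_none (w : List (A ⊕ B)) :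
    (prodDFA D₁ D₂).evalFrom none w = none := by
  induction w with
  | nil => rfl
  | cons c w ih => simpa [DFA.evalFrom, prodDFA] using ih

lemma prodDFA_eval_left (u : List A) : ∀ (q : Q₁) (r : Q₂),
    (prodDFA D₁ D₂).evalFrom (some (q, r, false)) (u.map Sum.inl) =
      some (D₁.evalFrom q u, r, false) := by
  induction u with
  | nil => intro q r; rfl
  | cons a u ih =>
    intro q r
    simpa [DFA.evalFrom, prodDFA] using ih (D₁.step q a) r

lemma prodDFA_eval_right (v : List B) : ∀ (q : Q₁) (r : Q₂) (b : Bool), ∃ b' : Bool,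
    (prodDFA D₁ D₂).evalFrom (some (q, r, b)) (v.map Sum.inr) =
      some (q, D₂.evalFrom r v, b') := by
  induction v with
  | nil => intro q r b; exact ⟨b, rfl⟩
  | cons c v ih =>
    intro q r b
    obtain ⟨b', hb'⟩ := ih q (D₂.step r c) true
    refine ⟨b', ?_⟩
    cases b <;> simpa [DFA.evalFrom, prodDFA] using hb'

lemma prodDFA_shape_true (w : List (A ⊕ B)) : ∀ (q : Q₁) (r : Q₂) (s : Q₁ × Q₂ × Bool),
    (prodDFA D₁ D₂).evalFrom (some (q, r, true)) w = some s →
    ∃ v : List B, w = v.map Sum.inr ∧ s.1 = q ∧ s.2.1 = D₂.evalFrom r v := by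
  induction w with
  | nil =>
    intro q r s h
    refine ⟨[], rfl, ?_, ?_⟩ <;> simp [DFA.evalFrom] at h <;> simp [← h]
  | cons c w ih =>
    intro q r s h
    cases c with
    | inl a =>
      exfalso
      have : (prodDFA D₁ D₂).evalFrom none w = some s := h
      rw [prodDFA_eval_none] at this
      simp at this
    | inr b =>
      have h' : (prodDFA D₁ D₂).evalFrom (some (q, D₂.step r b, true)) w = some s := h
      obtain ⟨v, hv, h1, h2⟩ := ih q (D₂.step r b) s h'
      exact ⟨b :: v, by simp [hv], h1, by simpa [DFA.evalFrom] using h2⟩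

lemma prodDFA_shape (w : List (A ⊕ B)) : ∀ (q : Q₁) (s : Q₁ × Q₂ × Bool),
    (prodDFA D₁ D₂).evalFrom (some (q, D₂.start, false)) w = some s →
    ∃ (u : List A) (v : List B), w = u.map Sum.inl ++ v.map Sum.inr ∧
      s.1 = D₁.evalFrom q u ∧ s.2.1 = D₂.evalFrom D₂.start v := by
  induction w with
  | nil =>
    intro q s h
    refine ⟨[], [], rfl, ?_, ?_⟩ <;> simp [DFA.evalFrom] at h <;> simp [← h, DFA.evalFrom]
  | cons c w ih =>
    intro q s h
    cases c with
    | inl a =>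
      have h' : (prodDFA D₁ D₂).evalFrom (some (D₁.step q a, D₂.start, false)) w = some s := h
      obtain ⟨u, v, hw, h1, h2⟩ := ih (D₁.step q a) s h'
      exact ⟨a :: u, v, by simp [hw], by simpa [DFA.evalFrom] using h1, h2⟩
    | inr b =>
      have h' : (prodDFA D₁ D₂).evalFrom (some (q, D₂.step D₂.start b, true)) w = some s := h
      obtain ⟨v, hw, h1, h2⟩ := prodDFA_shape_true D₁ D₂ w q (D₂.step D₂.start b) s h'
      exact ⟨[], b :: v, by simp [hw], by simp [h1, DFA.evalFrom],
        by simpa [DFA.evalFrom] using h2⟩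

lemma prodDFA_accepts :
    (prodDFA D₁ D₂).accepts =
      {w | ∃ (u : List A) (v : List B),
        w = u.map Sum.inl ++ v.map Sum.inr ∧ u ∈ D₁.accepts ∧ v ∈ D₂.accepts} := by
  ext w
  constructor
  · intro hw
    rw [DFA.mem_accepts] at hw
    obtain ⟨q, r, b, heq, hq, hr⟩ := hw
    obtain ⟨u, v, hw', h1, h2⟩ := prodDFA_shape D₁ D₂ w D₁.start (q, r, b) heq
    exact ⟨u, v, hw', by rwa [DFA.mem_accepts, DFA.eval, ← h1], by rwa [DFA.mem_accepts, DFA.eval, ← h2]⟩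
  · rintro ⟨u, v, rfl, hu, hv⟩
    rw [DFA.mem_accepts]
    obtain ⟨b', hb'⟩ := prodDFA_eval_right D₁ D₂ v (D₁.evalFrom D₁.start u) D₂.start false
    have : (prodDFA D₁ D₂).eval (u.map Sum.inl ++ v.map Sum.inr) =
        some (D₁.evalFrom D₁.start u, D₂.evalFrom D₂.start v, b') := by
      rw [DFA.eval, DFA.evalFrom_of_append]
      show (prodDFA D₁ D₂).evalFrom ((prodDFA D₁ D₂).evalFrom (some (D₁.start, D₂.start, false)) (u.map Sum.inl)) _ = _
      rw [prodDFA_eval_left, hb']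
    exact ⟨_, _, _, this, hu, hv⟩

end DFAsect

section Key

variable {A B M N : Type} [Monoid M] [Monoid N]

def prodLang (L₁ : Language A) (L₂ : Language B) : Language (A ⊕ B) :=
  {w | ∃ (u : List A) (v : List B), w = u.map Sum.inl ++ v.map Sum.inr ∧ u ∈ L₁ ∧ v ∈ L₂}

variable {φ : A → M} {ψ : B → N} {L₁ : Language A} {L₂ : Language B}

lemma key_markov (h₁ : IsMonMarkovLang φ L₁) (h₂ : IsMonMarkovLang ψ L₂) :
    IsMonMarkovLang (pairMap φ ψ) (prodLang L₁ L₂) := by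
  constructor
  · obtain ⟨Q₁, _, D₁, hD₁⟩ := h₁.regular
    obtain ⟨Q₂, _, D₂, hD₂⟩ := h₂.regular
    exact ⟨Option (Q₁ × Q₂ × Bool), inferInstance, prodDFA D₁ D₂, by
      rw [prodDFA_accepts, hD₁, hD₂]; rfl⟩
  · rintro w x ⟨u, v, hw, hu, hv⟩
    have hwt : w = (w ++ x).take w.length := by simp
    rw [hw, List.take_append, ← List.map_take, ← List.map_take] at hwt
    refine ⟨u.take w.length, v.take (w.length - (u.map Sum.inl).length), hwt, ?_, ?_⟩
    · exact h₁.prefix_closed _ (u.drop w.length) (by rw [List.take_append_drop]; exact hu)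
    · exact h₂.prefix_closed _ (v.drop _) (by rw [List.take_append_drop]; exact hv)
  · rintro ⟨m, n⟩
    obtain ⟨u, ⟨hu, hpu⟩, huu⟩ := h₁.unique_rep m
    obtain ⟨v, ⟨hv, hpv⟩, huv⟩ := h₂.unique_rep n
    refine ⟨u.map Sum.inl ++ v.map Sum.inr, ⟨⟨u, v, rfl, hu, hv⟩, by
      rw [monProd_pairMap, filterMap_encode_left, filterMap_encode_right, hpu, hpv]⟩, ?_⟩
    rintro w' ⟨⟨u', v', rfl, hu', hv'⟩, hp'⟩
    rw [monProd_pairMap, filterMap_encode_left, filterMap_encode_right, Prod.mk.injEq] at hp'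
    rw [huu u' ⟨hu', hp'.1⟩, huv v' ⟨hv', hp'.2⟩]

lemma key_robust (h₁ : IsMonMarkovLang φ L₁) (h₂ : IsMonMarkovLang ψ L₂)
    (r₁ : ∀ w ∈ L₁, ∀ v : List A, monProd φ v = monProd φ w → w.length ≤ v.length)
    (r₂ : ∀ w ∈ L₂, ∀ v : List B, monProd ψ v = monProd ψ w → w.length ≤ v.length) :
    ∀ w ∈ prodLang L₁ L₂, ∀ v : List (A ⊕ B),
      monProd (pairMap φ ψ) v = monProd (pairMap φ ψ) w → w.length ≤ v.length := by
  rintro w ⟨u, v, rfl, hu, hv⟩ w' hp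
  rw [monProd_pairMap, monProd_pairMap, filterMap_encode_left, filterMap_encode_right,
    Prod.mk.injEq] at hp
  have h1 := r₁ u hu _ hp.1
  have h2 := r₂ v hv _ hp.2
  have h3 := length_filterMap_sum w'
  simp only [List.length_append, List.length_map]
  omega

end Key

/-- The direct product of two Markov monoids is Markov, and the direct product of two
robustly Markov monoids is robustly Markov. -/
theorem stmt17 {M N : Type} [Monoid M] [Monoid N] :
    (MonMarkov M → MonMarkov N → MonMarkov (M × N)) ∧
    (MonRobustlyMarkov M → MonRobustlyMarkov N → MonRobustlyMarkov (M × N)) := by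
  constructor
  · rintro ⟨A, hA, φ, -, L₁, h₁⟩ ⟨B, hB, ψ, -, L₂, h₂⟩
    have key := key_markov h₁ h₂
    refine ⟨A ⊕ B, @instFintypeSum A B hA hB, pairMap φ ψ, ?_, prodLang L₁ L₂, key⟩
    intro m
    obtain ⟨w, ⟨-, hw⟩, -⟩ := key.unique_rep m
    exact ⟨w, hw⟩
  · rintro ⟨A, hA, φ, -, L₁, h₁⟩ ⟨B, hB, ψ, -, L₂, h₂⟩
    have key := key_markov h₁.toIsMonMarkovLang h₂.toIsMonMarkovLang
    refine ⟨A ⊕ B, @instFintypeSum A B hA hB, pairMap φ ψ, ?_, prodLang L₁ L₂,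
      ⟨key, key_robust h₁.toIsMonMarkovLang h₂.toIsMonMarkovLang h₁.min_length h₂.min_length⟩⟩
    intro m
    obtain ⟨w, ⟨-, hw⟩, -⟩ := key.unique_rep m
    exact ⟨w, hw⟩
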